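/- Let f be a monic polynomial of degree n ≥ 2 over K with |n| < 1 and all roots of f of absolute value ≤ 1. If I(f) = |n|^{-1/(n-1)}, then every root w of the derivative f' satisfies |w| = |n|^{-1/(n-1)}, and the coefficient a_1 of z in f satisfies |a_1| = 1. -/

import Mathlib

open Polynomial Multiset


/-- `I(f) = max_{z : f(z)=0} min_{w : f'(w)=0} |z - w|`, expressed via `sSup`/`sInf`
(for the polynomials appearing in the statements these sets are finite and nonempty,
so `sSup`/`sInf` are the maximum/minimum). -/
noncomputable def sendovI {K : Type*} [Field K] (v : AbsoluteValue K ℝ)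
    (f : Polynomial K) : ℝ :=
  sSup ((fun z => sInf ((fun w => v (z - w)) '' {w : K | (Polynomial.derivative f).IsRoot w})) ''
    {z : K | f.IsRoot z})

lemma v_multiset_sum_le {K : Type*} [Field K] (v : AbsoluteValue K ℝ)
    (hna : IsNonarchimedean v) (s : Multiset K) (h : ∀ x ∈ s, v x ≤ 1) : v s.sum ≤ 1 := by
  induction s using Multiset.induction with
  | empty => simpa using zero_le_one
  | cons a t ih =>
    rw [Multiset.sum_cons]
    exact le_trans (hna a t.sum)
      (max_le (h a (Multiset.mem_cons_self a t)) (ih fun x hx => h x (Multiset.mem_cons_of_mem hx)))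

lemma v_multiset_prod_le_one {K : Type*} [Field K] (v : AbsoluteValue K ℝ)
    (s : Multiset K) (h : ∀ x ∈ s, v x ≤ 1) : v s.prod ≤ 1 := by
  induction s using Multiset.induction with
  | empty => simpa using le_refl 1
  | cons a t ih =>
    rw [Multiset.prod_cons, v.map_mul]
    exact mul_le_one₀ (h a (Multiset.mem_cons_self a t)) (v.nonneg _)
      (ih fun x hx => h x (Multiset.mem_cons_of_mem hx))

lemma prod_ge_pow {r : ℝ} (hr : 0 < r) (s : Multiset ℝ) (h : ∀ x ∈ s, r ≤ x) :
    r ^ (Multiset.card s) ≤ s.prod := by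
  induction s using Multiset.induction with
  | empty => simp
  | cons a t ih =>
    rw [Multiset.prod_cons, Multiset.card_cons, pow_succ, mul_comm (r ^ Multiset.card t) r]
    exact mul_le_mul (h a (Multiset.mem_cons_self a t))
      (ih fun x hx => h x (Multiset.mem_cons_of_mem hx)) (pow_pos hr _).le
      (hr.le.trans (h a (Multiset.mem_cons_self a t)))

lemma prod_rigid {r : ℝ} (hr : 0 < r) (s : Multiset ℝ) (h : ∀ x ∈ s, r ≤ x)
    (hp : s.prod ≤ r ^ (Multiset.card s)) : ∀ x ∈ s, x = r := by
  induction s using Multiset.induction with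
  | empty => simp
  | cons a t ih =>
    have ht : ∀ x ∈ t, r ≤ x := fun x hx => h x (Multiset.mem_cons_of_mem hx)
    have htp : r ^ Multiset.card t ≤ t.prod := prod_ge_pow hr t ht
    have ha : r ≤ a := h a (Multiset.mem_cons_self a t)
    have hprod : a * t.prod ≤ r * r ^ (Multiset.card t) := by
      have := hp
      rw [Multiset.prod_cons, Multiset.card_cons, pow_succ, mul_comm (r ^ Multiset.card t) r] at this
      exact this
    have haeq : a = r := by
      by_contra hne
      have hlt : r < a := lt_of_le_of_ne ha (Ne.symm hne)
      have : r * r ^ (Multiset.card t) < a * t.prod :=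
        mul_lt_mul hlt htp (pow_pos hr _) (hr.le.trans hlt.le)
      linarith
    intro x hx
    rcases Multiset.mem_cons.1 hx with hx | hx
    · rw [hx, haeq]
    · refine ih ht ?_ x hx
      rw [haeq] at hprod
      exact le_of_mul_le_mul_left hprod hr

/-- If a monic polynomial `f` of degree `n ≥ 2` with `|n| < 1` and all roots in the closed
unit disk attains the optimal bound `I(f) = |n|^{-1/(n-1)}`, then every root of `f'` has
absolute value exactly `|n|^{-1/(n-1)}` and the coefficient of `z` satisfies `|a₁| = 1`. -/
theorem optimal_bound_necessary {K : Type*} [Field K] [IsAlgClosed K] [CharZero K]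
    (v : AbsoluteValue K ℝ) (hna : IsNonarchimedean v)
    (n : ℕ) (hn : 2 ≤ n) (hsmall : v ((n : K)) < 1)
    (f : Polynomial K) (hmonic : f.Monic) (hdeg : f.natDegree = n)
    (hroots : ∀ z : K, f.IsRoot z → v z ≤ 1)
    (hopt : sendovI v f = v ((n : K)) ^ (-(1 / ((n : ℝ) - 1)))) :
    (∀ w : K, (Polynomial.derivative f).IsRoot w →
        v w = v ((n : K)) ^ (-(1 / ((n : ℝ) - 1)))) ∧
      v (f.coeff 1) = 1 := by
  unfold sendovI at hopt
  set R : ℝ := v ((n : K)) ^ (-(1 / ((n : ℝ) - 1))) with hR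
  have hnK : (n : K) ≠ 0 := Nat.cast_ne_zero.2 (by omega)
  have hvn : 0 < v ((n : K)) := v.pos hnK
  have hnR1 : (0:ℝ) < (n : ℝ) - 1 := by
    have : (2:ℝ) ≤ (n:ℝ) := by exact_mod_cast hn
    linarith
  have hexp : -(1 / ((n : ℝ) - 1)) < 0 := neg_lt_zero.2 (by positivity)
  have hR1 : 1 < R := by
    rw [hR, Real.one_lt_rpow_iff_of_pos hvn]
    exact Or.inr ⟨hsmall, hexp⟩
  have hRpos : 0 < R := lt_trans one_pos hR1
  -- the derivative
  set g : Polynomial K := Polynomial.derivative f with hg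
  have hcoeffg : g.coeff (n - 1) = (n : K) := by
    rw [hg, Polynomial.coeff_derivative]
    have h1 : n - 1 + 1 = n := by omega
    rw [h1, ← hdeg, hmonic.coeff_natDegree, one_mul, hdeg]
    push_cast [Nat.cast_sub (by omega : 1 ≤ n)]
    ring
  have hgne : g ≠ 0 := fun h => hnK (by rw [← hcoeffg, h, Polynomial.coeff_zero])
  have hdegg : g.natDegree = n - 1 := by
    refine le_antisymm ?_ (Polynomial.le_natDegree_of_ne_zero (by rw [hcoeffg]; exact hnK))
    exact (Polynomial.natDegree_derivative_le f).trans (by omega)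
  have hleadg : g.leadingCoeff = (n : K) := by
    rw [Polynomial.leadingCoeff, hdegg, hcoeffg]
  have hfne : f ≠ 0 := hmonic.ne_zero
  -- root sets
  have hSf : ({z : K | f.IsRoot z}).Finite := Polynomial.finite_setOf_isRoot hfne
  have hSg : ({w : K | g.IsRoot w}).Finite := Polynomial.finite_setOf_isRoot hgne
  have hfdeg0 : f.degree ≠ 0 := by
    rw [Polynomial.degree_eq_natDegree hfne, hdeg]
    exact_mod_cast (by omega : (n:ℕ) ≠ 0)
  have hSfne : ({z : K | f.IsRoot z}).Nonempty := by
    obtain ⟨z, hz⟩ := IsAlgClosed.exists_root f hfdeg0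
    exact ⟨z, hz⟩
  have hgdeg0 : g.degree ≠ 0 := by
    rw [Polynomial.degree_eq_natDegree hgne, hdegg]
    exact_mod_cast (by omega : (n - 1 :ℕ) ≠ 0)
  have hSgne : ({w : K | g.IsRoot w}).Nonempty := by
    obtain ⟨w, hw⟩ := IsAlgClosed.exists_root g hgdeg0
    exact ⟨w, hw⟩
  -- the sup is attained
  set T : K → ℝ := fun z => sInf ((fun w => v (z - w)) '' {w : K | g.IsRoot w}) with hT
  have hmem : R ∈ T '' {z : K | f.IsRoot z} := by
    rw [← hopt]
    exact (hSfne.image T).csSup_mem (hSf.image T)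
  obtain ⟨z0, hz0, hz0T⟩ := hmem
  -- each root of g is far from z0
  have hfar : ∀ w : K, g.IsRoot w → R ≤ v (z0 - w) := by
    intro w hw
    have h1 : T z0 ≤ v (z0 - w) :=
      csInf_le ((hSg.image _).bddBelow) ⟨w, hw, rfl⟩
    rw [hz0T] at h1
    exact h1
  have hwlow : ∀ w : K, g.IsRoot w → R ≤ v w := by
    intro w hw
    by_contra hlt
    push_neg at hlt
    have h1 : v (z0 - w) ≤ max (v z0) (v w) := by
      have := hna z0 (-w)
      rwa [v.map_neg, ← sub_eq_add_neg] at this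
    have h2 : max (v z0) (v w) < R :=
      max_lt (lt_of_le_of_lt (hroots z0 hz0) hR1) hlt
    exact absurd (hfar w hw) (by linarith)
  -- roots multiset of g
  have hsplitg : g.Splits := IsAlgClosed.splits g
  have hcard : Multiset.card g.roots = n - 1 := by
    rw [Polynomial.splits_iff_card_roots.1 hsplitg, hdegg]
  have hrootsmem : ∀ w ∈ g.roots, g.IsRoot w := fun w hw => (Polynomial.mem_roots hgne).1 hw
  -- product formula
  have hkey : v (f.coeff 1) = v ((n : K)) * (g.roots.map v).prod := by
    have hc0 : g.coeff 0 = f.coeff 1 := by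
      rw [hg, Polynomial.coeff_derivative]
      push_cast
      ring
    have heq := hsplitg.eq_prod_roots
    have heval : Polynomial.eval 0 g = (n : K) * (g.roots.map (fun w => -w)).prod := by
      conv_lhs => rw [heq]
      rw [Polynomial.eval_mul, Polynomial.eval_C, hleadg, Polynomial.eval_multiset_prod,
        Multiset.map_map]
      congr 1
      refine congrArg _ (Multiset.map_congr rfl fun w _ => ?_)
      simp [Function.comp]
    have : f.coeff 1 = (n : K) * (g.roots.map (fun w => -w)).prod := by
      rw [← hc0, Polynomial.coeff_zero_eq_eval_zero, heval]
    rw [this, v.map_mul]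
    congr 1
    rw [map_multiset_prod v, Multiset.map_map]
    refine congrArg _ (Multiset.map_congr rfl fun w _ => ?_)
    simp [v.map_neg]
  -- bound |a1| ≤ 1
  have ha1le : v (f.coeff 1) ≤ 1 := by
    have hsplitf : f.Splits := IsAlgClosed.splits f
    have hcardf : Multiset.card f.roots = f.natDegree := Polynomial.splits_iff_card_roots.1 hsplitf
    have h1le : 1 ≤ f.natDegree := by omega
    have hco := Polynomial.coeff_eq_esymm_roots_of_card hcardf h1le
    rw [hco, hmonic.leadingCoeff, one_mul, v.map_mul, map_pow, v.map_neg, v.map_one, one_pow,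
      one_mul]
    rw [Multiset.esymm]
    apply v_multiset_sum_le v hna
    intro x hx
    rw [Multiset.mem_map] at hx
    obtain ⟨t, ht, rfl⟩ := hx
    have htsub : t ≤ f.roots := (Multiset.mem_powersetCard.1 ht).1
    apply v_multiset_prod_le_one v
    intro y hy
    exact hroots y ((Polynomial.mem_roots hfne).1 (Multiset.mem_of_le htsub hy))
  -- the rpow arithmetic : R ^ (n-1) = 1 / v n
  have hpow : R ^ (n - 1 : ℕ) = (v ((n : K)))⁻¹ := by
    rw [hR, ← Real.rpow_natCast (_ ^ _), ← Real.rpow_mul hvn.le]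
    have hcast : ((n - 1 : ℕ) : ℝ) = (n : ℝ) - 1 := by
      push_cast [Nat.cast_sub (by omega : 1 ≤ n)]
      ring
    rw [hcast]
    have : -(1 / ((n : ℝ) - 1)) * ((n : ℝ) - 1) = -1 := by
      field_simp
    rw [this, Real.rpow_neg_one]
  -- combine
  have hlowM : ∀ x ∈ g.roots.map v, R ≤ x := by
    intro x hx
    rw [Multiset.mem_map] at hx
    obtain ⟨w, hw, rfl⟩ := hx
    exact hwlow w (hrootsmem w hw)
  have hcardM : Multiset.card (g.roots.map v) = n - 1 := by
    rw [Multiset.card_map, hcard]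
  have hup : (g.roots.map v).prod ≤ R ^ (n - 1 : ℕ) := by
    rw [hpow]
    have : (g.roots.map v).prod = v (f.coeff 1) / v ((n : K)) := by
      rw [hkey]; field_simp
    rw [this, div_le_iff₀ hvn, inv_mul_cancel₀ (ne_of_gt hvn)]
    exact ha1le
  have hlo : R ^ (n - 1 : ℕ) ≤ (g.roots.map v).prod := by
    rw [← hcardM]
    exact prod_ge_pow hRpos _ hlowM
  constructor
  · intro w hw
    have hwM : w ∈ g.roots := (Polynomial.mem_roots hgne).2 hw
    have := prod_rigid hRpos (g.roots.map v) hlowM (by rw [hcardM]; exact hup)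
    exact this (v w) (Multiset.mem_map_of_mem v hwM)
  · refine le_antisymm ha1le ?_
    have h1 : (v ((n : K)))⁻¹ ≤ v (f.coeff 1) / v ((n : K)) := by
      have : (g.roots.map v).prod = v (f.coeff 1) / v ((n : K)) := by
        rw [hkey]; field_simp
      rw [← this, ← hpow]
      exact hlo
    rw [div_eq_mul_inv] at h1
    have := mul_le_mul_of_nonneg_right h1 hvn.le
    rwa [inv_mul_cancel₀ (ne_of_gt hvn), mul_assoc, inv_mul_cancel₀ (ne_of_gt hvn), mul_one] at this
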